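/- Let 0 < α < 1 and let φ : [0,∞) → ℝ be continuously differentiable with φ(0) ≥ 0. If there exists t* > 0 with φ(t*) = 0 and φ(t) > 0 for 0 ≤ t < t*, and φ is nonincreasing in a neighborhood of t* from the left, then the left Caputo derivative satisfies (C D_t^α φ)(t*) ≤ 0. -/

import Mathlib

open MeasureTheory intervalIntegral Set Filter

theorem stmt_13 (α : ℝ) (hα0 : 0 < α) (hα1 : α < 1)
    (φ : ℝ → ℝ) (hφ : ContDiff ℝ 1 φ) (hφ0 : 0 ≤ φ 0)
    (tstar : ℝ) (htstar : 0 < tstar) (hzero : φ tstar = 0)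
    (hpos : ∀ t : ℝ, 0 ≤ t → t < tstar → 0 < φ t)
    (hmono : ∃ δ > 0, AntitoneOn φ (Set.Ioc (tstar - δ) tstar)) :
    (1 / Real.Gamma (1 - α)) * ∫ s in (0 : ℝ)..tstar, deriv φ s * (tstar - s) ^ (-α) ≤ 0 := by
  have h1α : (0:ℝ) < 1 - α := by linarith
  set g : ℝ → ℝ := fun s => (tstar - s) ^ (-α) with hgdef
  have hderiv : Continuous (deriv φ) := hφ.continuous_deriv le_rfl
  obtain ⟨M, hM⟩ := (isCompact_Icc (a := (0:ℝ)) (b := tstar)).exists_bound_of_continuousOn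
    hderiv.continuousOn
  have hM0 : 0 ≤ M := le_trans (norm_nonneg _) (hM 0 ⟨le_rfl, htstar.le⟩)
  have hφnn : ∀ t ∈ Icc (0:ℝ) tstar, 0 ≤ φ t := by
    intro t ht
    rcases lt_or_eq_of_le ht.2 with h | h
    · exact (hpos t ht.1 h).le
    · simp [h, hzero]
  have hgnn : ∀ s ≤ tstar, 0 ≤ g s := fun s hs =>
    Real.rpow_nonneg (by linarith) _
  -- integrability of g on [0, tstar]
  have hg_int : IntervalIntegrable g volume 0 tstar := by
    have h := (intervalIntegral.intervalIntegrable_rpow' (a := 0) (b := tstar)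
      (r := -α) (by linarith)).comp_sub_left tstar
    simpa using h.symm
  have hg_meas : Measurable g := (measurable_const.sub measurable_id).pow_const _
  -- integrability of the full integrand on [0, tstar]
  have hfg_int : IntervalIntegrable (fun s => deriv φ s * g s) volume 0 tstar := by
    apply (hg_int.const_mul M).mono_fun'
      ((hderiv.measurable.mul hg_meas).aestronglyMeasurable.restrict)
    rw [uIoc_of_le htstar.le]
    filter_upwards [ae_restrict_mem measurableSet_Ioc] with x hx
    have hgx : 0 ≤ g x := hgnn x hx.2
    have : |deriv φ x| ≤ M := hM x ⟨hx.1.le, hx.2⟩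
    calc ‖deriv φ x * g x‖ = |deriv φ x| * g x := by
          rw [norm_mul, Real.norm_eq_abs, Real.norm_eq_abs, abs_of_nonneg hgx]
      _ ≤ M * g x := mul_le_mul_of_nonneg_right this hgx
  set C : ℝ := M * (1 + 1 / (1 - α)) with hCdef
  -- main estimate for each u ∈ [0, tstar)
  have key : ∀ u, 0 ≤ u → u < tstar →
      (∫ s in (0:ℝ)..tstar, deriv φ s * g s) ≤ C * (tstar - u) ^ (1 - α) := by
    intro u hu0 hut
    have hmem_u : u ∈ uIcc (0:ℝ) tstar := by
      rw [uIcc_of_le htstar.le]; exact ⟨hu0, hut.le⟩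
    have hsub1 : uIcc (0:ℝ) u ⊆ uIcc (0:ℝ) tstar := uIcc_subset_uIcc left_mem_uIcc hmem_u
    have hsub2 : uIcc u tstar ⊆ uIcc (0:ℝ) tstar := uIcc_subset_uIcc hmem_u right_mem_uIcc
    have hint1 : IntervalIntegrable (fun s => deriv φ s * g s) volume 0 u :=
      hfg_int.mono_set hsub1
    have hint2 : IntervalIntegrable (fun s => deriv φ s * g s) volume u tstar :=
      hfg_int.mono_set hsub2
    have hsplit : (∫ s in (0:ℝ)..tstar, deriv φ s * g s) =
        (∫ s in (0:ℝ)..u, deriv φ s * g s) + ∫ s in u..tstar, deriv φ s * g s :=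
      (integral_add_adjacent_intervals hint1 hint2).symm
    have htu : (0:ℝ) < tstar - u := by linarith
    -- part 1 : IBP on [0, u]
    have hgderiv : ∀ x ∈ uIcc (0:ℝ) u, HasDerivAt g (α * (tstar - x) ^ (-α - 1)) x := by
      intro x hx
      rw [uIcc_of_le hu0] at hx
      have hx' : tstar - x ≠ 0 := by have := hx.2; intro h; linarith [lt_of_le_of_lt hx.2 hut, sub_eq_zero.mp h]
      have h := (Real.hasDerivAt_rpow_const (x := tstar - x) (p := -α)
        (Or.inl hx')).comp x ((hasDerivAt_id x).const_sub tstar)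
      refine h.congr_deriv ?_
      ring
    have hφderiv : ∀ x ∈ uIcc (0:ℝ) u, HasDerivAt φ (deriv φ x) x := fun x _ =>
      ((hφ.differentiable one_ne_zero) x).hasDerivAt
    have hg'int : IntervalIntegrable (fun x => α * (tstar - x) ^ (-α - 1)) volume 0 u := by
      apply ContinuousOn.intervalIntegrable
      apply ContinuousOn.mul continuousOn_const
      apply ContinuousOn.rpow_const (continuous_const.sub continuous_id).continuousOn
      intro x hx
      rw [uIcc_of_le hu0] at hx
      exact Or.inl (fun h => by simp only [Pi.sub_apply, id_eq] at h; have h2 := hx.2; have h3 := sub_eq_zero.mp h; linarith)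
    have hibp := integral_mul_deriv_eq_deriv_mul hgderiv hφderiv hg'int
      (hderiv.intervalIntegrable 0 u)
    -- hibp : ∫ x in 0..u, g x * deriv φ x = g u * φ u - g 0 * φ 0 - ∫ ... * φ x
    have hcomm : (∫ s in (0:ℝ)..u, deriv φ s * g s) = ∫ s in (0:ℝ)..u, g s * deriv φ s := by
      simp_rw [mul_comm]
    have hrem : 0 ≤ ∫ x in (0:ℝ)..u, (α * (tstar - x) ^ (-α - 1)) * φ x := by
      apply intervalIntegral.integral_nonneg hu0
      intro x hx
      have hx2 : x ≤ tstar := le_trans hx.2 hut.le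
      have h1 := hφnn x ⟨hx.1, hx2⟩
      have h3 : 0 ≤ (tstar - x) ^ (-α - 1) := Real.rpow_nonneg (by linarith) _
      exact mul_nonneg (mul_nonneg hα0.le h3) h1
    have hφu : φ u ≤ M * (tstar - u) := by
      have hdiff : ∀ x ∈ uIcc u tstar, HasDerivAt φ (deriv φ x) x := fun x _ =>
        ((hφ.differentiable one_ne_zero) x).hasDerivAt
      have hftc : (∫ x in u..tstar, deriv φ x) = φ tstar - φ u :=
        integral_deriv_eq_sub (fun x _ => (hφ.differentiable one_ne_zero) x)
          (hderiv.intervalIntegrable u tstar)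
      have hmono' : (∫ x in u..tstar, (-M : ℝ)) ≤ ∫ x in u..tstar, deriv φ x := by
        apply intervalIntegral.integral_mono_on hut.le intervalIntegrable_const
          (hderiv.intervalIntegrable u tstar)
        intro x hx
        have := hM x ⟨le_trans hu0 hx.1, hx.2⟩
        rw [Real.norm_eq_abs, abs_le] at this
        exact this.1
      rw [hftc, hzero] at hmono'
      simp only [intervalIntegral.integral_const, smul_eq_mul] at hmono'
      nlinarith
    have hbound1 : (∫ s in (0:ℝ)..u, deriv φ s * g s) ≤ M * (tstar - u) ^ (1 - α) := by
      rw [hcomm, hibp]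
      have hg0 : 0 ≤ g 0 * φ 0 := mul_nonneg (hgnn 0 htstar.le) hφ0
      have hgu : 0 ≤ g u := hgnn u hut.le
      have h1 : g u * φ u ≤ g u * (M * (tstar - u)) :=
        mul_le_mul_of_nonneg_left hφu hgu
      have h2 : g u * (M * (tstar - u)) = M * (tstar - u) ^ (1 - α) := by
        have : (tstar - u) ^ (1 - α) = (tstar - u) ^ (-α) * (tstar - u) := by
          rw [show (1 - α) = -α + 1 by ring, Real.rpow_add htu, Real.rpow_one]
        rw [this, hgdef]
        ring
      linarith
    -- part 2 : tail estimate on [u, tstar]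
    have hgint2 : IntervalIntegrable g volume u tstar := hg_int.mono_set hsub2
    have hbound2 : (∫ s in u..tstar, deriv φ s * g s) ≤ M / (1 - α) * (tstar - u) ^ (1 - α) := by
      have hle : (∫ s in u..tstar, deriv φ s * g s) ≤ ∫ s in u..tstar, M * g s := by
        apply intervalIntegral.integral_mono_on hut.le hint2 (hgint2.const_mul M)
        intro x hx
        have hgx : 0 ≤ g x := hgnn x hx.2
        have := hM x ⟨le_trans hu0 hx.1, hx.2⟩
        rw [Real.norm_eq_abs, abs_le] at this
        exact mul_le_mul_of_nonneg_right this.2 hgx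
      have hval : (∫ s in u..tstar, g s) = (tstar - u) ^ (1 - α) / (1 - α) := by
        have h1 : (∫ s in u..tstar, g s) = ∫ x in (tstar - tstar)..(tstar - u),
            x ^ (-α) := by
          rw [hgdef, ← intervalIntegral.integral_comp_sub_left (fun x : ℝ => x ^ (-α)) tstar]
        rw [h1, sub_self, integral_rpow (Or.inl (by linarith)),
          Real.zero_rpow (by intro h; linarith), show (-α + 1 : ℝ) = 1 - α from by ring,
          sub_zero]
      calc (∫ s in u..tstar, deriv φ s * g s) ≤ ∫ s in u..tstar, M * g s := hle
        _ = M * ∫ s in u..tstar, g s := by rw [intervalIntegral.integral_const_mul]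
        _ = M / (1 - α) * (tstar - u) ^ (1 - α) := by rw [hval]; ring
    rw [hsplit, hCdef]
    have : M * (1 + 1 / (1 - α)) * (tstar - u) ^ (1 - α)
        = M * (tstar - u) ^ (1 - α) + M / (1 - α) * (tstar - u) ^ (1 - α) := by ring
    rw [this]
    exact add_le_add hbound1 hbound2
  -- take the limit u → tstar⁻, i.e. ε = tstar - u → 0⁺
  have hI : (∫ s in (0:ℝ)..tstar, deriv φ s * g s) ≤ 0 := by
    have htend : Tendsto (fun ε : ℝ => C * ε ^ (1 - α)) (nhdsWithin 0 (Ioi 0)) (nhds 0) := by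
      have h1 : Tendsto (fun ε : ℝ => ε ^ (1 - α)) (nhds 0) (nhds ((0:ℝ) ^ (1 - α))) :=
        (Real.continuousAt_rpow_const 0 (1 - α) (Or.inr h1α.le)).tendsto
      rw [Real.zero_rpow (by linarith)] at h1
      have := (h1.const_mul C).mono_left (nhdsWithin_le_nhds (s := Ioi (0:ℝ)))
      simpa using this
    apply ge_of_tendsto htend
    filter_upwards [Ioo_mem_nhdsGT_of_mem (Set.mem_Ico.mpr ⟨le_rfl, htstar⟩)] with ε hε
    have := key (tstar - ε) (by linarith [hε.2]) (by linarith [hε.1])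
    simpa using this
  have hΓ : 0 ≤ 1 / Real.Gamma (1 - α) := by
    have := Real.Gamma_pos_of_pos h1α
    positivity
  exact mul_nonpos_iff.mpr (Or.inl ⟨hΓ, hI⟩)
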